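/- arXiv:2307.07704 — 2 statements merged into one kernel-verified Lean document; each statement's English description precedes it below -/
import Mathlib

section
/- Let Υ = {y_0,…,y_{M−1}} be M nonzero vectors in ℝ^D, let ŷ = y/‖y‖₂, let Z be a random k×D matrix, let η ∈ (0,1) with ηM a positive integer, and let ε̃₊, ε̃₋ > 0. Order the values ‖Zŷ‖₂² as ‖Zŷ_{(0)}‖₂² ≤ … ≤ ‖Zŷ_{(M−1)}‖₂², and set p₊(Υ) = P{‖Zŷ_{((1−η)M)}‖₂² > (1+ε̃₊)k} and p₋(Υ) = P{‖Zŷ_{(ηM−1)}‖₂² < (1−ε̃₋)k}. Then p₊(Υ) ≤ max over ηM-element subsets Υ(η) ⊆ Υ of the minimum over diagonal matrices Λ_{Υ(η)} with strictly positive diagonal entries of C(M, ηM)·P{‖Z·Υ(η)·Λ_{Υ(η)}‖_F² > (1+ε̃₊)·k·‖Υ(η)·Λ_{Υ(η)}‖_F²}, and likewise p₋(Υ) ≤ max over ηM-element subsets Υ(η) of the minimum over such Λ_{Υ(η)} of C(M, ηM)·P{‖Z·Υ(η)·Λ_{Υ(η)}‖_F² < (1−ε̃₋)·k·‖Υ(η)·Λ_{Υ(η)}‖_F²}.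 Here a subset Υ(η) is identified with the D×(ηM) matrix whose columns are its elements, ‖·‖_F is the Frobenius norm, and C(M, ηM) is the binomial coefficient. -/
open MeasureTheory ProbabilityTheory

noncomputable section

/-- Squared Euclidean norm of a vector. -/
def sqNorm {ι : Type*} [Fintype ι] (x : ι → ℝ) : ℝ := ∑ i, (x i) ^ 2

/-- Euclidean norm of a vector. -/
def eNorm {ι : Type*} [Fintype ι] (x : ι → ℝ) : ℝ := Real.sqrt (sqNorm x)

/-- Unit normalization of a vector (junk value `0` when `x = 0`). -/
def unit {ι : Type*} [Fintype ι] (x : ι → ℝ) : ι → ℝ := (eNorm x)⁻¹ • x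

/-- Squared Frobenius norm of a matrix. -/
def frobSq {α β : Type*} [Fintype α] [Fintype β] (A : Matrix α β ℝ) : ℝ :=
  ∑ i, ∑ j, (A i j) ^ 2

/-- The ℓ²→ℓ² operator norm of a matrix. -/
def opNorm {α β : Type*} [Fintype α] [Fintype β] (A : Matrix α β ℝ) : ℝ :=
  sSup {c : ℝ | ∃ x : β → ℝ, eNorm x ≤ 1 ∧ c = eNorm (A.mulVec x)}

/-- The ∞-stable rank `‖A‖_F² / ‖A‖²`. -/
def rInf {α β : Type*} [Fintype α] [Fintype β] (A : Matrix α β ℝ) : ℝ :=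
  frobSq A / (opNorm A) ^ 2

/-- The 4-stable rank `‖A‖_F⁴ / ‖AAᵀ‖_F²`. -/
def r4 {α β : Type*} [Fintype α] [Fintype β] (A : Matrix α β ℝ) : ℝ :=
  (frobSq A) ^ 2 / frobSq (A * A.transpose)

/-- The sub-gaussian (ψ₂) norm of a real random variable. -/
def psi2 {Ω : Type*} [MeasurableSpace Ω] (μ : Measure Ω) (f : Ω → ℝ) : ℝ :=
  sInf {t : ℝ | 0 < t ∧ ∫ ω, Real.exp (f ω ^ 2 / t ^ 2) ∂μ ≤ 2}

/-- The entries of the random matrix `Z` are i.i.d. -/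
def IIDEntries {Ω : Type*} [MeasurableSpace Ω] (μ : Measure Ω) {k D : ℕ}
    (Z : Ω → Matrix (Fin k) (Fin D) ℝ) : Prop :=
  (∀ p : Fin k × Fin D, Measurable fun ω => Z ω p.1 p.2) ∧
  iIndepFun (fun (p : Fin k × Fin D) ω => Z ω p.1 p.2) μ ∧
  ∀ p q : Fin k × Fin D,
    IdentDistrib (fun ω => Z ω p.1 p.2) (fun ω => Z ω q.1 q.2) μ μ

/-- The entries of the random matrix `Z` are i.i.d., mean-zero, unit-variance
and sub-gaussian. -/
def GoodEntries {Ω : Type*} [MeasurableSpace Ω] (μ : Measure Ω) {k D : ℕ}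
    (Z : Ω → Matrix (Fin k) (Fin D) ℝ) : Prop :=
  IIDEntries μ Z ∧
  (∀ i j, ∫ ω, Z ω i j ∂μ = 0) ∧
  (∀ i j, ∫ ω, (Z ω i j) ^ 2 ∂μ = 1) ∧
  (∀ i j, ∃ t : ℝ, 0 < t ∧ ∫ ω, Real.exp ((Z ω i j) ^ 2 / t ^ 2) ∂μ ≤ 2)

/-- The two-sided Johnson–Lindenstrauss inequality for the pair `u, v`,
with tolerance `ε` and normalization `√(γ/k)`. -/
def JLPair {k D : ℕ} (ε γ : ℝ) (Z : Matrix (Fin k) (Fin D) ℝ) (u v : Fin D → ℝ) : Prop :=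
  (1 - ε) * eNorm (u - v) ≤ Real.sqrt (γ / k) * eNorm (Z.mulVec (u - v)) ∧
  Real.sqrt (γ / k) * eNorm (Z.mulVec (u - v)) ≤ (1 + ε) * eNorm (u - v)


lemma sqNorm_nonneg' {ι : Type*} [Fintype ι] (x : ι → ℝ) : 0 ≤ sqNorm x :=
  Finset.sum_nonneg fun _ _ => sq_nonneg _

lemma eNorm_sq' {ι : Type*} [Fintype ι] (x : ι → ℝ) : eNorm x ^ 2 = sqNorm x :=
  Real.sq_sqrt (sqNorm_nonneg' x)

lemma eNorm_pos' {ι : Type*} [Fintype ι] {x : ι → ℝ} (hx : x ≠ 0) : 0 < eNorm x := by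
  apply Real.sqrt_pos.2
  obtain ⟨i, hi⟩ : ∃ i, x i ≠ 0 := by
    by_contra h; push_neg at h; exact hx (funext h)
  exact Finset.sum_pos' (fun _ _ => sq_nonneg _) ⟨i, Finset.mem_univ i, by positivity⟩

lemma smul_unit' {ι : Type*} [Fintype ι] {x : ι → ℝ} (hx : x ≠ 0) : eNorm x • unit x = x := by
  rw [unit, smul_smul, mul_inv_cancel₀ (eNorm_pos' hx).ne', one_smul]

lemma sqNorm_smul' {ι : Type*} [Fintype ι] (c : ℝ) (x : ι → ℝ) :
    sqNorm (c • x) = c ^ 2 * sqNorm x := by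
  simp [sqNorm, mul_pow, Finset.mul_sum]

lemma sqNorm_mulVec' {k D : ℕ} (Z : Matrix (Fin k) (Fin D) ℝ) {v : Fin D → ℝ} (hv : v ≠ 0) :
    sqNorm (Z.mulVec v) = eNorm v ^ 2 * sqNorm (Z.mulVec (unit v)) := by
  conv_lhs => rw [← smul_unit' hv]
  rw [Matrix.mulVec_smul, sqNorm_smul']

lemma frob_ZA' {k D m M : ℕ} (Z : Matrix (Fin k) (Fin D) ℝ) (y : Fin M → Fin D → ℝ)
    (hy : ∀ i, y i ≠ 0) (g : Fin m → Fin M) (lam : Fin m → ℝ) :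
    frobSq (Z * Matrix.of fun (d : Fin D) (i : Fin m) => lam i * y (g i) d)
      = ∑ i, (lam i ^ 2 * eNorm (y (g i)) ^ 2) * sqNorm (Z.mulVec (unit (y (g i)))) := by
  rw [frobSq, Finset.sum_comm]
  refine Finset.sum_congr rfl fun i _ => ?_
  have h1 : ∀ r, (Z * Matrix.of fun (d : Fin D) (i : Fin m) => lam i * y (g i) d) r i
      = lam i * Z.mulVec (y (g i)) r := by
    intro r
    simp only [Matrix.mul_apply, Matrix.of_apply, Matrix.mulVec, dotProduct,
      Finset.mul_sum]
    exact Finset.sum_congr rfl fun d _ => by ring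
  simp only [h1, mul_pow]
  rw [← Finset.mul_sum]
  have h2 : ∑ r, Z.mulVec (y (g i)) r ^ 2 = sqNorm (Z.mulVec (y (g i))) := rfl
  rw [h2, sqNorm_mulVec' Z (hy (g i))]
  ring

lemma frob_A' {D m M : ℕ} (y : Fin M → Fin D → ℝ) (g : Fin m → Fin M) (lam : Fin m → ℝ) :
    frobSq (Matrix.of fun (d : Fin D) (i : Fin m) => lam i * y (g i) d)
      = ∑ i, lam i ^ 2 * eNorm (y (g i)) ^ 2 := by
  rw [frobSq, Finset.sum_comm]
  refine Finset.sum_congr rfl fun i _ => ?_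
  simp only [Matrix.of_apply, mul_pow, ← Finset.mul_sum]
  rw [eNorm_sq', sqNorm]

lemma key_bound' {Ω : Type*} [MeasurableSpace Ω] (μ : Measure Ω) [IsProbabilityMeasure μ]
    {M m : ℕ} (hmM : m ≤ M)
    (P : Ω → Fin M → Prop) (Q : (Fin m ↪ Fin M) → {v : Fin m → ℝ // ∀ i, 0 < v i} → Set Ω)
    (hsub : ∀ (g : Fin m ↪ Fin M) (lam : {v : Fin m → ℝ // ∀ i, 0 < v i}),
      {ω | ∀ i, P ω (g i)} ⊆ Q g lam)
    (E : Set Ω) (hE : ∀ ω ∈ E, ∃ s : Finset (Fin M), s.card = m ∧ ∀ i ∈ s, P ω i) :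
    (μ E).toReal ≤ ⨆ g : Fin m ↪ Fin M, ⨅ lam : {v : Fin m → ℝ // ∀ i, 0 < v i},
      (M.choose m : ℝ) * (μ (Q g lam)).toReal := by
  classical
  have hne : Nonempty {v : Fin m → ℝ // ∀ i, 0 < v i} := ⟨⟨fun _ => 1, fun _ => one_pos⟩⟩
  set S : Finset (Finset (Fin M)) := Finset.univ.powersetCard m with hS
  have hScard : S.card = M.choose m := by
    rw [hS, Finset.card_powersetCard, Finset.card_univ, Fintype.card_fin]
  have hSne : S.Nonempty := by
    apply Finset.powersetCard_nonempty.2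
    simpa using hmM
  set F : Finset (Fin M) → Set Ω := fun s => {ω | ∀ i ∈ s, P ω i} with hF
  have hEsub : E ⊆ ⋃ s ∈ S, F s := by
    intro ω hω
    obtain ⟨s, hs, hPs⟩ := hE ω hω
    exact Set.mem_biUnion (show s ∈ S from Finset.mem_powersetCard_univ.2 hs) hPs
  obtain ⟨s0, hs0, hmax⟩ := S.exists_max_image (fun s => μ (F s)) hSne
  have hs0card : s0.card = m := (Finset.mem_powersetCard.1 hs0).2
  have h1 : μ E ≤ (M.choose m : ℕ) • μ (F s0) := by
    calc μ E ≤ ∑ s ∈ S, μ (F s) := (measure_mono hEsub).trans (measure_biUnion_finset_le S F)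
    _ ≤ S.card • μ (F s0) := Finset.sum_le_card_nsmul S _ _ (fun s hs => hmax s hs)
    _ = _ := by rw [hScard]
  have h2 : (μ E).toReal ≤ (M.choose m : ℝ) * (μ (F s0)).toReal := by
    have hnt : (M.choose m : ℕ) • μ (F s0) ≠ ⊤ := by
      rw [nsmul_eq_mul]
      exact ENNReal.mul_ne_top (ENNReal.natCast_ne_top _) (measure_ne_top _ _)
    have := ENNReal.toReal_mono hnt h1
    rw [nsmul_eq_mul, ENNReal.toReal_mul] at this
    simpa using this
  set g0 : Fin m ↪ Fin M := (s0.orderEmbOfFin hs0card).toEmbedding with hg0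
  have hg0mem : ∀ i, g0 i ∈ s0 := fun i => Finset.orderEmbOfFin_mem s0 hs0card i
  have hFsub : ∀ lam, F s0 ⊆ Q g0 lam := fun lam =>
    Set.Subset.trans (fun ω hω i => hω _ (hg0mem i)) (hsub g0 lam)
  have hbdd : BddAbove (Set.range fun g : Fin m ↪ Fin M =>
      ⨅ lam : {v : Fin m → ℝ // ∀ i, 0 < v i}, (M.choose m : ℝ) * (μ (Q g lam)).toReal) := by
    refine ⟨(M.choose m : ℝ), ?_⟩
    rintro _ ⟨g, rfl⟩
    refine ciInf_le_of_le ⟨0, ?_⟩ ⟨fun _ => 1, fun _ => one_pos⟩ ?_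
    · rintro _ ⟨lam, rfl⟩
      positivity
    · have h3 : (μ (Q g ⟨fun _ => 1, fun _ => one_pos⟩)).toReal ≤ (1 : ENNReal).toReal :=
        ENNReal.toReal_mono ENNReal.one_ne_top prob_le_one
      rw [ENNReal.toReal_one] at h3
      nlinarith [h3, Nat.cast_nonneg (α := ℝ) (M.choose m)]
  refine h2.trans (le_trans ?_ (le_ciSup hbdd g0))
  refine le_ciInf fun lam => ?_
  exact mul_le_mul_of_nonneg_left
    (ENNReal.toReal_mono (measure_ne_top _ _) (measure_mono (hFsub lam)))
    (Nat.cast_nonneg _)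

/-- Lemma: order statistics via Frobenius norms.
For a batch `Υ = {y_0, …, y_{M-1}}` of nonzero vectors, the probabilities `p₊(Υ)` and
`p₋(Υ)` that the `(1-η)M`-th (resp. `(ηM-1)`-th) order statistic of the values
`‖Z ŷ‖₂²` exceeds `(1+ε̃₊)k` (resp. falls below `(1-ε̃₋)k`) are bounded by the
max over `ηM`-element subsets `Υ(η) ⊆ Υ` of the min over positive diagonal
scalings `Λ` of `C(M, ηM) ⬝ P{‖Z Υ(η) Λ‖_F² ≷ (1±ε̃±) k ‖Υ(η) Λ‖_F²}`. -/
theorem order_statistics_via_frobenius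
    {Ω : Type*} [MeasurableSpace Ω] (μ : Measure Ω) [IsProbabilityMeasure μ]
    {D M k : ℕ} (y : Fin M → Fin D → ℝ) (hy : ∀ i, y i ≠ 0)
    (Z : Ω → Matrix (Fin k) (Fin D) ℝ)
    (η epP epM : ℝ) (hη0 : 0 < η) (hη1 : η < 1)
    (m : ℕ) (hm0 : 0 < m) (hmeq : (m : ℝ) = η * M) (hmM : m < M)
    (hepP : 0 < epP) (hepM : 0 < epM) :
    ((μ {ω | (1 + epP) * k <
          (fun i => sqNorm ((Z ω).mulVec (unit (y i))))
            (Tuple.sort (fun i => sqNorm ((Z ω).mulVec (unit (y i)))) ⟨M - m, by omega⟩)}).toReal ≤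
        ⨆ g : Fin m ↪ Fin M, ⨅ lam : {v : Fin m → ℝ // ∀ i, 0 < v i},
          (M.choose m : ℝ) *
            (μ {ω | (1 + epP) * k *
                  frobSq (Matrix.of fun (d : Fin D) (i : Fin m) => lam.val i * y (g i) d) <
                frobSq (Z ω * Matrix.of fun (d : Fin D) (i : Fin m) =>
                  lam.val i * y (g i) d)}).toReal) ∧
    ((μ {ω | (fun i => sqNorm ((Z ω).mulVec (unit (y i))))
            (Tuple.sort (fun i => sqNorm ((Z ω).mulVec (unit (y i)))) ⟨m - 1, by omega⟩) <
          (1 - epM) * k}).toReal ≤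
        ⨆ g : Fin m ↪ Fin M, ⨅ lam : {v : Fin m → ℝ // ∀ i, 0 < v i},
          (M.choose m : ℝ) *
            (μ {ω | frobSq (Z ω * Matrix.of fun (d : Fin D) (i : Fin m) =>
                  lam.val i * y (g i) d) <
                (1 - epM) * k *
                  frobSq (Matrix.of fun (d : Fin D) (i : Fin m) => lam.val i * y (g i) d)}).toReal) := by
  have hFinm : Nonempty (Fin m) := ⟨⟨0, hm0⟩⟩
  constructor
  · -- plus side
    refine key_bound' μ hmM.le
      (fun ω i => (1 + epP) * k < sqNorm ((Z ω).mulVec (unit (y i))))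
      (fun g lam => {ω | (1 + epP) * k *
          frobSq (Matrix.of fun (d : Fin D) (i : Fin m) => lam.val i * y (g i) d) <
        frobSq (Z ω * Matrix.of fun (d : Fin D) (i : Fin m) => lam.val i * y (g i) d)})
      ?_ _ ?_
    · intro g lam ω hω
      have hc : ∀ i : Fin m, 0 < lam.val i ^ 2 * eNorm (y (g i)) ^ 2 := fun i => by
        have h1 := lam.2 i
        have h2 := eNorm_pos' (hy (g i))
        positivity
      simp only [Set.mem_setOf_eq] at hω ⊢
      rw [frob_ZA' _ y hy g lam.val, frob_A' y g lam.val, Finset.mul_sum]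
      refine Finset.sum_lt_sum_of_nonempty Finset.univ_nonempty fun i _ => ?_
      rw [mul_comm ((1 + epP) * (k : ℝ))]
      exact mul_lt_mul_of_pos_left (hω i) (hc i)
    · intro ω hω
      simp only [Set.mem_setOf_eq] at hω
      set f : Fin M → ℝ := fun i => sqNorm ((Z ω).mulVec (unit (y i))) with hf
      set σ := Tuple.sort f with hσ
      refine ⟨Finset.image (fun j : Fin m => σ ⟨M - m + j.val, by omega⟩) Finset.univ, ?_, ?_⟩
      · rw [Finset.card_image_of_injective _ ?_, Finset.card_univ, Fintype.card_fin]
        intro a b hab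
        have := σ.injective hab
        have : M - m + a.val = M - m + b.val := congrArg Fin.val this
        exact Fin.ext (by omega)
      · intro i hi
        obtain ⟨j, _, rfl⟩ := Finset.mem_image.1 hi
        refine lt_of_lt_of_le hω ?_
        exact Tuple.monotone_sort f (show (⟨M - m, by omega⟩ : Fin M) ≤ ⟨M - m + j.val, by omega⟩
          from by simp)
  · -- minus side
    refine key_bound' μ hmM.le
      (fun ω i => sqNorm ((Z ω).mulVec (unit (y i))) < (1 - epM) * k)
      (fun g lam => {ω | frobSq (Z ω * Matrix.of fun (d : Fin D) (i : Fin m) =>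
          lam.val i * y (g i) d) <
        (1 - epM) * k *
          frobSq (Matrix.of fun (d : Fin D) (i : Fin m) => lam.val i * y (g i) d)})
      ?_ _ ?_
    · intro g lam ω hω
      have hc : ∀ i : Fin m, 0 < lam.val i ^ 2 * eNorm (y (g i)) ^ 2 := fun i => by
        have h1 := lam.2 i
        have h2 := eNorm_pos' (hy (g i))
        positivity
      simp only [Set.mem_setOf_eq] at hω ⊢
      rw [frob_ZA' _ y hy g lam.val, frob_A' y g lam.val, Finset.mul_sum]
      refine Finset.sum_lt_sum_of_nonempty Finset.univ_nonempty fun i _ => ?_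
      rw [mul_comm ((1 - epM) * (k : ℝ))]
      exact mul_lt_mul_of_pos_left (hω i) (hc i)
    · intro ω hω
      simp only [Set.mem_setOf_eq] at hω
      set f : Fin M → ℝ := fun i => sqNorm ((Z ω).mulVec (unit (y i))) with hf
      set σ := Tuple.sort f with hσ
      refine ⟨Finset.image (fun j : Fin m => σ ⟨j.val, by omega⟩) Finset.univ, ?_, ?_⟩
      · rw [Finset.card_image_of_injective _ ?_, Finset.card_univ, Fintype.card_fin]
        intro a b hab
        have h2 : (a.val : ℕ) = b.val := by
          have := congrArg (Fin.val (n := M)) (σ.injective hab)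
          simpa using this
        exact Fin.ext h2
      · intro i hi
        obtain ⟨j, _, rfl⟩ := Finset.mem_image.1 hi
        refine lt_of_le_of_lt ?_ hω
        refine Tuple.monotone_sort f (show (⟨j.val, by omega⟩ : Fin M) ≤ ⟨m - 1, by omega⟩
          from by simp; omega)
end
end

section
/- (Walecki construction.) For every N, the edge set of the complete graph K_N on N vertices admits a partition into (N−1)/2 Hamiltonian cycles (cycles of length N) when N is odd, and into (N−2)/2 Hamiltonian cycles together with one perfect matching (a 1-factor, i.e. a spanning 1-regular subgraph) when N is even. -/
namespace Walecki

open SimpleGraph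

/-! ### The zigzag function -/

/-- zigzag function: 0, -1, 1, -2, 2, ... in `ZMod m`. -/
def g (m t : ℕ) : ZMod m := if t % 2 = 0 then ((t/2 : ℕ) : ZMod m) else -(((t/2 + 1 : ℕ)) : ZMod m)

lemma g_val {m : ℕ} [NeZero m] (t : ℕ) (ht : t < m) :
    (g m t).val = if t % 2 = 0 then t/2 else m - 1 - t/2 := by
  unfold g
  split_ifs with h
  · exact ZMod.val_cast_of_lt (by omega)
  · have h2 : (-(((t/2 + 1 : ℕ)) : ZMod m)) = ((m - (t/2 + 1) : ℕ) : ZMod m) := by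
      have hle : t/2 + 1 ≤ m := by omega
      push_cast [Nat.cast_sub hle]
      simp
    rw [h2, ZMod.val_cast_of_lt (by omega)]
    omega

lemma g_inj {m : ℕ} [NeZero m] {t t' : ℕ} (ht : t < m) (ht' : t' < m)
    (h : g m t = g m t') : t = t' := by
  have := congrArg ZMod.val h
  rw [g_val t ht, g_val t' ht'] at this
  split_ifs at this <;> omega

lemma g_surj {m : ℕ} [NeZero m] (y : ZMod m) : ∃ t, t < m ∧ g m t = y := by
  rcases lt_or_ge (2 * y.val) m with h | h
  · refine ⟨2 * y.val, by omega, ?_⟩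
    have h0 : (2 * y.val) % 2 = 0 := by omega
    rw [g, if_pos h0]
    have : 2 * y.val / 2 = y.val := by omega
    rw [this, ZMod.natCast_val, ZMod.cast_id]
  · have hv : y.val < m := ZMod.val_lt y
    refine ⟨2 * (m - 1 - y.val) + 1, by omega, ?_⟩
    rw [g, if_neg (by omega)]
    have : (2 * (m - 1 - y.val) + 1) / 2 + 1 = m - y.val := by omega
    rw [this]
    have : ((m - y.val : ℕ) : ZMod m) = -(y.val : ZMod m) := by
      push_cast [Nat.cast_sub hv.le]
      simp
    rw [this, neg_neg, ZMod.natCast_val, ZMod.cast_id]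

/-- the sum of consecutive zigzag values. -/
lemma g_sum {m : ℕ} (t : ℕ) :
    g m t + g m (t+1) = if t % 2 = 0 then -1 else 0 := by
  unfold g
  rcases Nat.even_or_odd t with h | h
  · have h0 : t % 2 = 0 := Nat.even_iff.mp h
    have h1 : (t+1) % 2 ≠ 0 := by omega
    rw [if_pos h0, if_neg h1, if_pos h0]
    have : (t+1)/2 + 1 = t/2 + 1 := by omega
    rw [this]
    push_cast
    ring
  · have h0 : t % 2 ≠ 0 := by have := Nat.odd_iff.mp h; omega
    have h1 : (t+1) % 2 = 0 := by have := Nat.odd_iff.mp h; omega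
    rw [if_neg h0, if_pos h1, if_neg h0]
    have : (t+1)/2 = t/2 + 1 := by have := Nat.odd_iff.mp h; omega
    rw [this]
    push_cast
    ring

lemma g_zero (m : ℕ) : g m 0 = 0 := by simp [g]

/-! ### The walk -/

variable {m : ℕ}

abbrev V (m : ℕ) := Option (ZMod m)
abbrev KG (m : ℕ) : SimpleGraph (V m) := ⊤

lemma map_range_shift {α : Type*} (f : ℕ → α) (k t : ℕ) :
    (List.range (k+1)).map (fun s => f (t+s)) = f t :: (List.range k).map (fun s => f (t+1+s)) := by
  rw [List.range_succ_eq_map, List.map_cons, List.map_map]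
  simp only [Nat.add_zero, List.cons.injEq, true_and]
  exact List.map_congr_left fun s _ => by
    simp only [Function.comp_apply]; rw [show t+(s+1) = t+1+s by omega]

/-- vertex at position `u` (inner positions `0..m-1`, then `none`). -/
def Lv (j : ZMod m) (u : ℕ) : V m := if u < m then some (j + g m u) else none

lemma adj_zig [NeZero m] (j : ZMod m) {t : ℕ} (ht : t + 1 < m) :
    (KG m).Adj (some (j + g m t)) (some (j + g m (t+1))) := by
  simp only [top_adj, ne_eq, Option.some.injEq]
  intro h
  have := g_inj (m := m) (by omega : t < m) ht (add_left_cancel h)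
  omega

/-- the zigzag path from position `t` (with `t + k + 1 = m`) down to `none`. -/
def zig [NeZero m] (j : ZMod m) : (k : ℕ) → (t : ℕ) → (h : t + k + 1 = m) →
    (KG m).Walk (some (j + g m t)) none
  | 0, _, _ => Walk.cons (by simp) Walk.nil
  | (k+1), t, h => Walk.cons (adj_zig j (by omega)) (zig j k (t+1) (by omega))

lemma support_zig [NeZero m] (j : ZMod m) (k t : ℕ) (h : t + k + 1 = m) :
    (zig j k t h).support = ((List.range (k+1)).map fun s => some (j + g m (t+s))) ++ [none] := by
  induction k generalizing t with
  | zero => simp [zig, List.range_succ]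
  | succ k ih =>
    rw [zig, Walk.support_cons, ih (t+1) (by omega),
      map_range_shift (fun u => some (j + g m u)) (k+1) t]
    simp

lemma edges_zig [NeZero m] (j : ZMod m) (k t : ℕ) (h : t + k + 1 = m) :
    (zig j k t h).edges = (List.range (k+1)).map fun s => s(Lv j (t+s), Lv j (t+s+1)) := by
  induction k generalizing t with
  | zero =>
    rw [zig]
    simp only [Walk.edges_cons, Walk.edges_nil, List.range_succ, List.range_zero,
      List.nil_append, List.map_cons, List.map_nil, Nat.add_zero, Lv]
    rw [if_pos (show t < m by omega), if_neg (show ¬ (t + 1 < m) by omega)]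
  | succ k ih =>
    have hshift : (List.range (k+1+1)).map (fun s => s(Lv j (t+s), Lv j (t+s+1)))
        = s(Lv j t, Lv j (t+1)) ::
          (List.range (k+1)).map (fun s => s(Lv j (t+1+s), Lv j (t+1+s+1))) := by
      have := map_range_shift (fun u => s(Lv j u, Lv (m := m) j (u+1))) (k+1) t
      simpa using this
    rw [zig, Walk.edges_cons, ih (t+1) (by omega), hshift]
    congr 1
    simp only [Lv]
    rw [if_pos (by omega), if_pos (by omega)]

/-- the full closed walk of the `j`-th Walecki cycle. -/
def W [NeZero m] (j : ZMod m) : (KG m).Walk none none :=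
  Walk.cons (by simp) (zig j (m-1) 0 (by have := NeZero.ne m; omega))

lemma support_zig0 [NeZero m] (j : ZMod m) :
    (zig j (m-1) 0 (by have := NeZero.ne m; omega)).support
      = ((List.range m).map fun s => some (j + g m s)) ++ [none] := by
  rw [support_zig]
  have hm := NeZero.ne m
  rw [show m-1+1 = m by omega]
  congr 1
  exact List.map_congr_left fun s _ => by rw [Nat.zero_add]

lemma edges_zig0 [NeZero m] (j : ZMod m) :
    (zig j (m-1) 0 (by have := NeZero.ne m; omega)).edges
      = (List.range m).map fun s => s(Lv j s, Lv j (s+1)) := by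
  rw [edges_zig]
  have hm := NeZero.ne m
  rw [show m-1+1 = m by omega]
  exact List.map_congr_left fun s _ => by rw [Nat.zero_add]

lemma nodup_inner [NeZero m] (j : ZMod m) :
    (((List.range m).map fun s => some (j + g m s)) : List (V m)).Nodup := by
  refine List.Nodup.map_on ?_ List.nodup_range
  intro s hs s' hs' e
  simp only [List.mem_range] at hs hs'
  simp only [Option.some.injEq] at e
  exact g_inj hs hs' (add_left_cancel e)

lemma mem_inner [NeZero m] (j : ZMod m) (y : ZMod m) :
    some y ∈ (((List.range m).map fun s => some (j + g m s)) : List (V m)) := by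
  obtain ⟨t, ht, hgt⟩ := g_surj (y - j)
  simp only [List.mem_map, List.mem_range, Option.some.injEq]
  exact ⟨t, ht, by rw [hgt]; ring⟩

lemma isHamiltonianCycle_W [NeZero m] (hm : 2 ≤ m) (j : ZMod m) : (W j).IsHamiltonianCycle := by
  rw [Walk.isHamiltonianCycle_iff_isCycle_and_support_count_tail_eq_one]
  have hnodup : ((zig j (m-1) 0 (by have := NeZero.ne m; omega)).support).Nodup := by
    rw [support_zig0]
    refine List.Nodup.append (nodup_inner j) (by simp) ?_
    intro x hx hx'
    simp only [List.mem_singleton] at hx'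
    subst hx'
    simp at hx
  constructor
  · simp only [W]
    rw [Walk.cons_isCycle_iff]
    refine ⟨Walk.isPath_def _ |>.mpr hnodup, ?_⟩
    rw [edges_zig0]
    simp only [List.mem_map, List.mem_range, not_exists, not_and]
    intro s hs heq
    rw [Lv, if_pos hs] at heq
    by_cases hc : s + 1 < m
    · rw [Lv, if_pos hc] at heq
      simp [Sym2.eq_iff] at heq
    · rw [Lv, if_neg hc] at heq
      rw [Sym2.eq_iff] at heq
      rcases heq with ⟨h1, _⟩ | ⟨h1, _⟩
      · exact Option.some_ne_none _ h1
      · simp only [Option.some.injEq] at h1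
        have := g_inj hs (by omega : 0 < m) (add_left_cancel h1)
        omega
  · intro a
    have hsupp : (W j).support.tail = (zig j (m-1) 0 (by have := NeZero.ne m; omega)).support := by
      simp only [W, Walk.support_cons, List.tail_cons]
    rw [hsupp]
    refine @List.count_eq_one_of_mem _ instBEqOfDecidableEq _ _ _ hnodup ?_
    rw [support_zig0]
    cases a with
    | none => simp
    | some y => exact List.mem_append_left _ (mem_inner j y)


/-! ### Edge characterization -/

lemma cast_val_eq [NeZero m] (x : ZMod m) : ((x.val : ℕ) : ZMod m) = x := by
  rw [ZMod.natCast_val, ZMod.cast_id]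

lemma mod2 (A : ℕ) (hA : A < 2*m) : A % m = if A < m then A else A - m := by
  split_ifs with h
  · exact Nat.mod_eq_of_lt h
  · rw [Nat.mod_eq_sub_mod (by omega)]
    exact Nat.mod_eq_of_lt (by omega)

/-- workhorse: equality in `ZMod m` of casts of small naturals. -/
lemma castNat_eq_iff {A B : ℕ} (hA : A < 2*m) (hB : B < 2*m) :
    ((A : ZMod m) = (B : ZMod m)) ↔ (A = B ∨ A = B + m ∨ B = A + m) := by
  rw [ZMod.natCast_eq_natCast_iff', mod2 A hA, mod2 B hB]
  split_ifs <;> omega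

/-- The abstract description of the edges of the `j`-th Walecki cycle. -/
def Sset (m : ℕ) (j : ZMod m) : Set (Sym2 (V m)) :=
  {e | e = s(none, some j) ∨ e = s(none, some (j + g m (m-1))) ∨
    ∃ a b : ZMod m, a ≠ b ∧ (a + b = 2*j ∨ a + b + 1 = 2*j) ∧ e = s(some a, some b)}

lemma edges_W [NeZero m] (j : ZMod m) :
    (W j).edges = s(none, some j) :: (List.range m).map fun s => s(Lv j s, Lv j (s+1)) := by
  simp only [W, Walk.edges_cons, edges_zig0, g_zero, add_zero]

lemma exists_t [NeZero m] {j a b : ZMod m} (hab : a ≠ b)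
    (hsum : a + b = 2*j ∨ a + b + 1 = 2*j) :
    ∃ t, t + 1 < m ∧ s(some (j + g m t), some (j + g m (t+1))) = s(some a, some b) := by
  have hm1 : 1 ≤ m := Nat.one_le_iff_ne_zero.mpr (NeZero.ne m)
  rcases hsum with hsum | hsum
  · -- even type : a + b = 2j
    set x := a - j with hx
    have hb : b = j - x := by rw [hx]; linear_combination hsum
    have hx0 : x ≠ 0 := by
      intro h0
      apply hab
      rw [hx] at h0
      have ha' : a = j := by linear_combination h0
      have hb' : b = j := by rw [hb, hx]; linear_combination -h0
      rw [ha', hb']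
    have hxv1 : 1 ≤ x.val := by
      rcases Nat.eq_zero_or_pos x.val with h | h
      · exact absurd (by rw [← cast_val_eq x, h, Nat.cast_zero]) hx0
      · omega
    have hxvm : x.val < m := ZMod.val_lt x
    have hxx : 2 * x.val ≠ m := by
      intro h
      apply hab
      have h2 : x + x = 0 := by
        have hc : ((x.val + x.val : ℕ) : ZMod m) = 0 := by
          rw [show x.val + x.val = m by omega, ZMod.natCast_self]
        push_cast [cast_val_eq] at hc
        exact hc
      have ha' : a = j + x := by rw [hx]; ring
      rw [ha', hb]
      linear_combination h2
    set k := min x.val (m - x.val) with hkdef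
    have hk1 : 1 ≤ k := by omega
    have hk2 : 2 * k < m := by omega
    refine ⟨2*k - 1, by omega, ?_⟩
    have hgt : g m (2*k-1) = -((k : ℕ) : ZMod m) := by
      rw [g, if_neg (by omega)]
      congr 1
      push_cast [show (2*k-1)/2 + 1 = k by omega]
      rfl
    have hgt1 : g m (2*k-1+1) = ((k : ℕ) : ZMod m) := by
      rw [g, if_pos (by omega)]
      congr 1
      omega
    rw [hgt, hgt1, Sym2.eq_iff]
    rcases min_cases x.val (m - x.val) with ⟨hkv, _⟩ | ⟨hkv, _⟩
    · right
      have hcast : ((k : ℕ) : ZMod m) = x := by rw [hkdef, hkv, cast_val_eq]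
      rw [hcast]
      constructor
      · rw [hb]; ring
      · rw [hx]; ring
    · left
      have hcast : ((k : ℕ) : ZMod m) = -x := by
        rw [hkdef, hkv]
        push_cast [Nat.cast_sub hxvm.le, cast_val_eq]
        simp
      rw [hcast]
      constructor
      · rw [hx]; ring
      · rw [hb]; ring
  · -- odd type : a + b + 1 = 2j
    set x := a - j with hx
    set y := b - j with hy
    have hxy : x + y + 1 = 0 := by rw [hx, hy]; linear_combination hsum
    have hxvm : x.val < m := ZMod.val_lt x
    have hyvm : y.val < m := ZMod.val_lt y
    have hsum2 : x.val + y.val = m - 1 := by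
      have hc : ((x.val + y.val + 1 : ℕ) : ZMod m) = ((m:ℕ) : ZMod m) := by
        push_cast [cast_val_eq]
        rw [ZMod.natCast_self]
        linear_combination hxy
      rw [castNat_eq_iff (by omega) (by omega)] at hc
      rcases hc with hd|hd|hd <;> omega
    have hne : x.val ≠ y.val := by
      intro h
      apply hab
      have : x = y := by rw [← cast_val_eq x, ← cast_val_eq y, h]
      have ha' : a = j + x := by rw [hx]; ring
      have hb' : b = j + y := by rw [hy]; ring
      rw [ha', hb', this]
    set k := min x.val y.val with hkdef
    have hk2 : 2 * k + 1 < m := by omega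
    refine ⟨2*k, by omega, ?_⟩
    have hgt : g m (2*k) = ((k : ℕ) : ZMod m) := by
      rw [g, if_pos (by omega)]
      congr 1
      omega
    have hgt1 : g m (2*k+1) = -((k+1 : ℕ) : ZMod m) := by
      rw [g, if_neg (by omega)]
      congr 1
      push_cast [show (2*k+1)/2 + 1 = k + 1 by omega]
      rfl
    rw [hgt, hgt1, Sym2.eq_iff]
    rcases min_cases x.val y.val with ⟨hkv, _⟩ | ⟨hkv, _⟩
    · left
      have hcast : ((k : ℕ) : ZMod m) = x := by rw [hkdef, hkv, cast_val_eq]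
      constructor
      · rw [hcast, hx]; ring
      · have hpc : j + -((k+1 : ℕ) : ZMod m) = b := by
          push_cast [hcast]
          linear_combination hy - hxy
        rw [hpc]
    · right
      have hcast : ((k : ℕ) : ZMod m) = y := by rw [hkdef, hkv, cast_val_eq]
      constructor
      · rw [hcast, hy]; ring
      · have hpc : j + -((k+1 : ℕ) : ZMod m) = a := by
          push_cast [hcast]
          linear_combination hx - hxy
        rw [hpc]

lemma mem_edges_W [NeZero m] (hm : 2 ≤ m) (j : ZMod m) (e : Sym2 (V m)) :
    e ∈ (W j).edges ↔ e ∈ Sset m j := by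
  rw [edges_W]
  constructor
  · intro h
    rcases List.mem_cons.mp h with h | h
    · exact Or.inl h
    · obtain ⟨s, hs, rfl⟩ := List.mem_map.mp h
      rw [List.mem_range] at hs
      rw [Lv, if_pos hs]
      by_cases hc : s + 1 < m
      · rw [Lv, if_pos hc]
        refine Or.inr (Or.inr ⟨j + g m s, j + g m (s+1), ?_, ?_, rfl⟩)
        · intro hcon
          have := g_inj (by omega : s < m) hc (add_left_cancel hcon)
          omega
        · have hgs := g_sum (m := m) s
          split_ifs at hgs with hpar
          · right; linear_combination hgs
          · left; linear_combination hgs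
      · rw [Lv, if_neg hc]
        have hs' : s = m - 1 := by omega
        subst hs'
        right; left
        exact Sym2.eq_swap
  · intro h
    rcases h with h | h | ⟨a, b, hab, hsum, rfl⟩
    · exact List.mem_cons.mpr (Or.inl h)
    · refine List.mem_cons.mpr (Or.inr (List.mem_map.mpr ⟨m-1, by simp; omega, ?_⟩))
      rw [Lv, if_pos (by omega), Lv, if_neg (by omega)]
      rw [h]
      exact Sym2.eq_swap
    · obtain ⟨t, ht, heq⟩ := exists_t hab hsum
      refine List.mem_cons.mpr (Or.inr (List.mem_map.mpr ⟨t, by simp; omega, ?_⟩))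
      rw [Lv, if_pos (by omega), Lv, if_pos ht]
      exact heq


/-! ### Arithmetic toolkit -/

lemma zmod_eq_cast [NeZero m] (x : ZMod m) (B : ℕ) (hB : B < 2*m)
    (h : x.val = B ∨ x.val = B + m ∨ B = x.val + m) : x = ((B : ℕ) : ZMod m) := by
  have hx := ZMod.val_lt x
  have h2 := (castNat_eq_iff (m := m) (A := x.val) (by omega) hB).mpr h
  rw [cast_val_eq] at h2
  exact h2

lemma shift_eq [NeZero m] (x : ZMod m) (A B : ℕ) (hA : x.val + A < 2*m) (hB : B < 2*m)
    (h : x.val + A = B ∨ x.val + A = B + m ∨ B = x.val + A + m) :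
    x + ((A:ℕ) : ZMod m) = ((B:ℕ) : ZMod m) := by
  rw [← cast_val_eq x, ← Nat.cast_add]
  exact (castNat_eq_iff hA hB).mpr h

lemma g_last_cast [NeZero m] : g m (m-1) = ((m/2 : ℕ) : ZMod m) := by
  have hm1 : 1 ≤ m := Nat.one_le_iff_ne_zero.mpr (NeZero.ne m)
  rw [← cast_val_eq (g m (m-1)), g_val (m-1) (by omega)]
  congr 1
  split_ifs with h <;> omega

lemma neg_one_cast [NeZero m] : (-1 : ZMod m) = ((m-1 : ℕ) : ZMod m) := by
  have hm1 : 1 ≤ m := Nat.one_le_iff_ne_zero.mpr (NeZero.ne m)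
  rw [Nat.cast_sub hm1, ZMod.natCast_self, Nat.cast_one]
  ring

lemma add_self_eq_zero_odd [NeZero m] (hodd : m % 2 = 1) {y : ZMod m} (h : y + y = 0) :
    y = 0 := by
  have hv := ZMod.val_lt y
  have hcast : ((y.val + y.val : ℕ) : ZMod m) = ((0:ℕ) : ZMod m) := by
    push_cast [cast_val_eq]
    linear_combination h
  rw [castNat_eq_iff (by omega) (by omega)] at hcast
  have h0 : y.val = 0 := by rcases hcast with hd|hd|hd <;> omega
  rw [← cast_val_eq y, h0]
  simp

/-! ### Disjointness of the cycles -/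

lemma Sset_disjoint [NeZero m] {c : ℕ} (hc : m = 2*c ∨ m = 2*c+1) {i i' : ℕ}
    (hi : i < c) (hi' : i' < c) {e : Sym2 (V m)}
    (h1 : e ∈ Sset m ((i:ℕ) : ZMod m)) (h2 : e ∈ Sset m ((i':ℕ) : ZMod m)) : i = i' := by
  have hm2c : 2*c ≤ m := by omega
  have hm1 : 1 ≤ m := Nat.one_le_iff_ne_zero.mpr (NeZero.ne m)
  have hm2 : m/2 = c := by omega
  rcases h1 with h1 | h1 | ⟨a, b, hab, hsum, he⟩ <;>
    rcases h2 with h2 | h2 | ⟨a2, b2, hab2, hsum2, he2⟩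
  · -- A A
    rw [h1, Sym2.eq_iff] at h2
    simp only [Option.some.injEq, and_self, false_and, and_false, or_false] at h2
    rw [castNat_eq_iff (by omega) (by omega)] at h2
    rcases h2 with hd|hd|hd <;> omega
  · -- A B
    rw [h1, g_last_cast, ← Nat.cast_add, Sym2.eq_iff] at h2
    simp only [Option.some.injEq, and_self, false_and, and_false, or_false] at h2
    rw [castNat_eq_iff (by omega) (by omega)] at h2
    rcases h2 with hd|hd|hd <;> omega
  · -- A C
    rw [h1, Sym2.eq_iff] at he2
    simp at he2
  · -- B A
    rw [h2, g_last_cast, ← Nat.cast_add, Sym2.eq_iff] at h1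
    simp only [Option.some.injEq, and_self, false_and, and_false, or_false] at h1
    rw [castNat_eq_iff (by omega) (by omega)] at h1
    rcases h1 with hd|hd|hd <;> omega
  · -- B B
    rw [h1, g_last_cast, ← Nat.cast_add, ← Nat.cast_add, Sym2.eq_iff] at h2
    simp only [Option.some.injEq, and_self, false_and, and_false, or_false] at h2
    rw [castNat_eq_iff (by omega) (by omega)] at h2
    rcases h2 with hd|hd|hd <;> omega
  · -- B C
    rw [h1, Sym2.eq_iff] at he2
    simp at he2
  · -- C A
    rw [h2, Sym2.eq_iff] at he
    simp at he
  · -- C B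
    rw [h2, Sym2.eq_iff] at he
    simp at he
  · -- C C
    rw [he, Sym2.eq_iff] at he2
    simp only [Option.some.injEq] at he2
    have hss : a2 + b2 = a + b := by
      rcases he2 with ⟨h1', h2'⟩ | ⟨h1', h2'⟩
      · rw [h1', h2']
      · rw [h1', h2']; ring
    rw [hss] at hsum2
    rcases hsum with h | h <;> rcases hsum2 with h' | h'
    · have hcc : ((2*i:ℕ) : ZMod m) = ((2*i' : ℕ) : ZMod m) := by
        push_cast
        linear_combination h' - h
      rw [castNat_eq_iff (by omega) (by omega)] at hcc
      rcases hcc with hd|hd|hd <;> omega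
    · have hcc : ((2*i+1:ℕ) : ZMod m) = ((2*i' : ℕ) : ZMod m) := by
        push_cast
        linear_combination h' - h
      rw [castNat_eq_iff (by omega) (by omega)] at hcc
      rcases hcc with hd|hd|hd <;> omega
    · have hcc : ((2*i:ℕ) : ZMod m) = ((2*i'+1 : ℕ) : ZMod m) := by
        push_cast
        linear_combination h' - h
      rw [castNat_eq_iff (by omega) (by omega)] at hcc
      rcases hcc with hd|hd|hd <;> omega
    · have hcc : ((2*i:ℕ) : ZMod m) = ((2*i' : ℕ) : ZMod m) := by
        push_cast
        linear_combination h' - h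
      rw [castNat_eq_iff (by omega) (by omega)] at hcc
      rcases hcc with hd|hd|hd <;> omega

/-! ### The matching -/

/-- the abstract edge set of the matching (for odd `m`). -/
def Mset (m : ℕ) : Set (Sym2 (V m)) :=
  {e | e = s(none, some (-1)) ∨ ∃ a b : ZMod m, a ≠ b ∧ a + b + 2 = 0 ∧ e = s(some a, some b)}

/-- the matching relation. -/
def Mrel (m : ℕ) : V m → V m → Prop := fun u v =>
  (u = none ∧ v = some (-1)) ∨ (v = none ∧ u = some (-1)) ∨
  (∃ a b : ZMod m, u = some a ∧ v = some b ∧ a ≠ b ∧ a + b + 2 = 0)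

/-- the matching, as a subgraph of `KG m`. -/
def FF (m : ℕ) : (KG m).Subgraph where
  verts := Set.univ
  Adj := Mrel m
  adj_sub := by
    rintro u v (⟨rfl, rfl⟩ | ⟨rfl, rfl⟩ | ⟨a, b, rfl, rfl, hab, _⟩)
    · simp
    · simp
    · simpa using hab
  edge_vert := fun _ => Set.mem_univ _
  symm := by
    constructor
    rintro u v (⟨rfl, rfl⟩ | ⟨rfl, rfl⟩ | ⟨a, b, rfl, rfl, hab, h⟩)
    · exact Or.inr (Or.inl ⟨rfl, rfl⟩)
    · exact Or.inl ⟨rfl, rfl⟩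
    · exact Or.inr (Or.inr ⟨b, a, rfl, rfl, hab.symm, by linear_combination h⟩)

lemma FF_isPerfectMatching [NeZero m] (hodd : m % 2 = 1) : (FF m).IsPerfectMatching := by
  rw [SimpleGraph.Subgraph.isPerfectMatching_iff]
  intro v
  match v with
  | none =>
    refine ⟨some (-1), Or.inl ⟨rfl, rfl⟩, ?_⟩
    rintro w (⟨_, rfl⟩ | ⟨rfl, hw⟩ | ⟨a, b, hw, _, _, _⟩)
    · rfl
    · exact absurd hw (by simp)
    · exact absurd hw (by simp)
  | some a =>
    by_cases ha : a = -1
    · subst ha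
      refine ⟨none, Or.inr (Or.inl ⟨rfl, rfl⟩), ?_⟩
      rintro w (⟨hw, _⟩ | ⟨rfl, _⟩ | ⟨a', b, ha', rfl, hab, hsum⟩)
      · exact absurd hw (by simp)
      · rfl
      · exfalso
        apply hab
        simp only [Option.some.injEq] at ha'
        linear_combination -hsum - 2*ha'
    · refine ⟨some (-2 - a), Or.inr (Or.inr ⟨a, -2-a, rfl, rfl, ?_, by ring⟩), ?_⟩
      · intro hcon
        apply ha
        have h2 : (a+1) + (a+1) = 0 := by linear_combination hcon
        have := add_self_eq_zero_odd hodd h2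
        linear_combination this
      · rintro w (⟨hw, _⟩ | ⟨rfl, hw⟩ | ⟨a', b, ha', rfl, hab, hsum⟩)
        · exact absurd hw (by simp)
        · exact absurd (by injection hw) ha
        · simp only [Option.some.injEq] at ha'
          subst ha'
          have hb : b = -2 - a := by linear_combination hsum
          rw [hb]

lemma mem_edgeSet_FF (e : Sym2 (V m)) : e ∈ (FF m).edgeSet ↔ e ∈ Mset m := by
  induction e using Sym2.ind with
  | _ x y =>
    rw [SimpleGraph.Subgraph.mem_edgeSet]
    constructor
    · rintro (⟨rfl, rfl⟩ | ⟨rfl, rfl⟩ | ⟨a, b, rfl, rfl, hab, h⟩)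
      · exact Or.inl rfl
      · exact Or.inl Sym2.eq_swap
      · exact Or.inr ⟨a, b, hab, h, rfl⟩
    · rintro (h | ⟨a, b, hab, hsum, h⟩)
      · rw [Sym2.eq_iff] at h
        rcases h with ⟨rfl, rfl⟩ | ⟨rfl, rfl⟩
        · exact Or.inl ⟨rfl, rfl⟩
        · exact Or.inr (Or.inl ⟨rfl, rfl⟩)
      · rw [Sym2.eq_iff] at h
        rcases h with ⟨rfl, rfl⟩ | ⟨rfl, rfl⟩
        · exact Or.inr (Or.inr ⟨a, b, rfl, rfl, hab, hsum⟩)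
        · exact Or.inr (Or.inr ⟨b, a, rfl, rfl, hab.symm, by linear_combination hsum⟩)

lemma Sset_Mset_disjoint [NeZero m] {c : ℕ} (hmodd : m = 2*c+1) {i : ℕ} (hi : i < c)
    {e : Sym2 (V m)} (h1 : e ∈ Sset m ((i:ℕ) : ZMod m)) (h2 : e ∈ Mset m) : False := by
  have hm1 : 1 ≤ m := by omega
  have hm2 : m/2 = c := by omega
  rcases h1 with h1 | h1 | ⟨a, b, hab, hsum, he⟩ <;>
    rcases h2 with h2 | ⟨a2, b2, hab2, hsum2, he2⟩
  · rw [h1, neg_one_cast, Sym2.eq_iff] at h2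
    simp only [Option.some.injEq, and_self, false_and, and_false, or_false] at h2
    rw [castNat_eq_iff (by omega) (by omega)] at h2
    rcases h2 with hd|hd|hd <;> omega
  · rw [h1, Sym2.eq_iff] at he2
    simp at he2
  · rw [h1, g_last_cast, ← Nat.cast_add, neg_one_cast, Sym2.eq_iff] at h2
    simp only [Option.some.injEq, and_self, false_and, and_false, or_false] at h2
    rw [castNat_eq_iff (by omega) (by omega)] at h2
    rcases h2 with hd|hd|hd <;> omega
  · rw [h1, Sym2.eq_iff] at he2
    simp at he2
  · rw [he, Sym2.eq_iff] at h2
    simp at h2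
  · rw [he, Sym2.eq_iff] at he2
    simp only [Option.some.injEq] at he2
    have hss : a2 + b2 = a + b := by
      rcases he2 with ⟨h1', h2'⟩ | ⟨h1', h2'⟩
      · rw [h1', h2']
      · rw [h1', h2']; ring
    rw [hss] at hsum2
    rcases hsum with h | h
    · have hcc : ((2*i+2:ℕ) : ZMod m) = ((m : ℕ) : ZMod m) := by
        rw [ZMod.natCast_self]
        push_cast
        linear_combination hsum2 - h
      rw [castNat_eq_iff (by omega) (by omega)] at hcc
      rcases hcc with hd|hd|hd <;> omega
    · have hcc : ((2*i+1:ℕ) : ZMod m) = ((m : ℕ) : ZMod m) := by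
        rw [ZMod.natCast_self]
        push_cast
        linear_combination hsum2 - h
      rw [castNat_eq_iff (by omega) (by omega)] at hcc
      rcases hcc with hd|hd|hd <;> omega

/-! ### Coverage -/

lemma cover_none_some [NeZero m] {c : ℕ} (hc : m = 2*c ∨ m = 2*c+1) (v : ZMod m) :
    (∃ i, i < c ∧ s(none, some v) ∈ Sset m ((i:ℕ) : ZMod m)) ∨
      (m = 2*c+1 ∧ s(none, some v) ∈ Mset m) := by
  have hv := ZMod.val_lt v
  have hm2 : m/2 = c := by omega
  by_cases h1 : v.val < c
  · exact Or.inl ⟨v.val, h1, Or.inl (by rw [cast_val_eq])⟩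
  · by_cases h2 : v.val < 2*c
    · refine Or.inl ⟨v.val - c, by omega, Or.inr (Or.inl ?_)⟩
      rw [g_last_cast, ← Nat.cast_add, show v.val - c + m/2 = v.val by omega, cast_val_eq]
    · rcases hc with hc | hc
      · omega
      · refine Or.inr ⟨hc, Or.inl ?_⟩
        rw [neg_one_cast, show m - 1 = v.val by omega, cast_val_eq]

lemma cover_inner [NeZero m] {c : ℕ} (hc : m = 2*c ∨ m = 2*c+1) {a b : ZMod m} (hab : a ≠ b) :
    (∃ i, i < c ∧ s(some a, some b) ∈ Sset m ((i:ℕ) : ZMod m)) ∨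
      (m = 2*c+1 ∧ s(some a, some b) ∈ Mset m) := by
  have hv := ZMod.val_lt (a+b)
  have hm1 : 1 ≤ m := Nat.one_le_iff_ne_zero.mpr (NeZero.ne m)
  have hc0 : 1 ≤ c := by
    rcases Nat.eq_zero_or_pos c with h | h
    · subst h
      have hm' : m = 1 := by omega
      exfalso
      apply hab
      have ha := ZMod.val_lt a
      have hb := ZMod.val_lt b
      rw [← cast_val_eq a, ← cast_val_eq b, show a.val = 0 by omega, show b.val = 0 by omega]
    · exact h
  -- helper equations
  have heven : ∀ i : ℕ, (a+b).val = 2*i → a + b = 2 * ((i:ℕ) : ZMod m) := by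
    intro i hi
    have := zmod_eq_cast (a+b) (2*i) (by omega) (by omega)
    rw [this]
    push_cast
    ring
  have hodd' : ∀ i : ℕ, ((a+b).val + 1 = 2*i ∨ (a+b).val + 1 = 2*i + m) →
      a + b + 1 = 2 * ((i:ℕ) : ZMod m) := by
    intro i hi
    have h' := shift_eq (a+b) 1 (2*i) (by omega) (by omega) (by omega)
    push_cast at h' ⊢
    linear_combination h'
  rcases hc with hc | hc
  · -- m = 2c
    by_cases hpar : (a+b).val % 2 = 0
    · exact Or.inl ⟨(a+b).val/2, by omega,
        Or.inr (Or.inr ⟨a, b, hab, Or.inl (heven _ (by omega)), rfl⟩)⟩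
    · by_cases hlast : (a+b).val = m - 1
      · exact Or.inl ⟨0, by omega,
          Or.inr (Or.inr ⟨a, b, hab, Or.inr (hodd' 0 (by omega)), rfl⟩)⟩
      · exact Or.inl ⟨((a+b).val+1)/2, by omega,
          Or.inr (Or.inr ⟨a, b, hab, Or.inr (hodd' _ (by omega)), rfl⟩)⟩
  · -- m = 2c+1
    by_cases hm2' : (a+b).val = m - 2
    · refine Or.inr ⟨hc, Or.inr ⟨a, b, hab, ?_, rfl⟩⟩
      have h' := shift_eq (a+b) 2 m (by omega) (by omega) (by omega)
      rw [ZMod.natCast_self] at h'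
      push_cast at h' ⊢
      linear_combination h'
    · by_cases hpar : (a+b).val % 2 = 0
      · by_cases hbig : (a+b).val = m - 1
        · exact Or.inl ⟨0, by omega,
            Or.inr (Or.inr ⟨a, b, hab, Or.inr (hodd' 0 (by omega)), rfl⟩)⟩
        · exact Or.inl ⟨(a+b).val/2, by omega,
            Or.inr (Or.inr ⟨a, b, hab, Or.inl (heven _ (by omega)), rfl⟩)⟩
      · exact Or.inl ⟨((a+b).val+1)/2, by omega,
          Or.inr (Or.inr ⟨a, b, hab, Or.inr (hodd' _ (by omega)), rfl⟩)⟩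

lemma cover [NeZero m] {c : ℕ} (hc : m = 2*c ∨ m = 2*c+1) {e : Sym2 (V m)}
    (he : ¬ e.IsDiag) :
    (∃ i, i < c ∧ e ∈ Sset m ((i:ℕ) : ZMod m)) ∨ (m = 2*c+1 ∧ e ∈ Mset m) := by
  induction e using Sym2.ind with
  | _ x y =>
    rw [Sym2.mk_isDiag_iff] at he
    match x, y with
    | none, none => exact absurd rfl he
    | none, some v => exact cover_none_some hc v
    | some a, none =>
      rw [show s(some a, (none : V m)) = s(none, some a) from Sym2.eq_swap]
      exact cover_none_some hc a
    | some a, some b =>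
      exact cover_inner hc (fun h => he (by rw [h]))


/-! ### The core theorem over `Option (ZMod m)` -/

theorem core (m c : ℕ) [NeZero m] (hc : m = 2*c ∨ m = 2*c + 1) :
    ∃ cyc : Fin c → Σ a : V m, (KG m).Walk a a,
      (∀ i, (cyc i).2.IsHamiltonianCycle) ∧
      (Set.univ : Set (Fin c)).PairwiseDisjoint (fun i => {e | e ∈ (cyc i).2.edges}) ∧
      (m = 2*c → (⋃ i, {e | e ∈ (cyc i).2.edges}) = (KG m).edgeSet) ∧
      (m = 2*c + 1 → ∃ F : (KG m).Subgraph, F.IsPerfectMatching ∧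
        (∀ i, Disjoint {e | e ∈ (cyc i).2.edges} F.edgeSet) ∧
        ((⋃ i, {e | e ∈ (cyc i).2.edges}) ∪ F.edgeSet = (KG m).edgeSet)) := by
  have hm1 : 1 ≤ m := Nat.one_le_iff_ne_zero.mpr (NeZero.ne m)
  refine ⟨fun i => ⟨none, W (((i : ℕ) : ℕ) : ZMod m)⟩, ?_, ?_, ?_, ?_⟩
  · intro i
    exact isHamiltonianCycle_W (by have := i.2; omega) _
  · intro i _ i' _ hne
    simp only [Function.onFun]
    rw [Set.disjoint_left]
    intro e he he'
    apply hne
    have h1 := (mem_edges_W (by have := i.2; omega) _ e).mp he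
    have h2 := (mem_edges_W (by have := i'.2; omega) _ e).mp he'
    exact Fin.ext (Sset_disjoint hc i.2 i'.2 h1 h2)
  · intro hme
    ext e
    simp only [Set.mem_iUnion, Set.mem_setOf_eq]
    constructor
    · rintro ⟨i, hi⟩
      exact Walk.edges_subset_edgeSet _ hi
    · intro hee
      have hnd : ¬ e.IsDiag := by
        intro hd
        induction e using Sym2.ind with
        | _ x y =>
          rw [Sym2.mk_isDiag_iff] at hd
          subst hd
          simp [SimpleGraph.mem_edgeSet] at hee
      rcases cover hc hnd with ⟨i, hi, hmem⟩ | ⟨hcc, _⟩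
      · exact ⟨⟨i, hi⟩, (mem_edges_W (by omega) _ e).mpr hmem⟩
      · omega
  · intro hmodd
    refine ⟨FF m, FF_isPerfectMatching (by omega), ?_, ?_⟩
    · intro i
      rw [Set.disjoint_left]
      intro e he he'
      exact Sset_Mset_disjoint hmodd i.2
        ((mem_edges_W (by have := i.2; omega) _ e).mp he) ((mem_edgeSet_FF e).mp he')
    · ext e
      simp only [Set.mem_union, Set.mem_iUnion, Set.mem_setOf_eq]
      constructor
      · rintro (⟨i, hi⟩ | hF)
        · exact Walk.edges_subset_edgeSet _ hi
        · exact (FF m).edgeSet_subset hF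
      · intro hee
        have hnd : ¬ e.IsDiag := by
          intro hd
          induction e using Sym2.ind with
          | _ x y =>
            rw [Sym2.mk_isDiag_iff] at hd
            subst hd
            simp [SimpleGraph.mem_edgeSet] at hee
        rcases cover hc hnd with ⟨i, hi, hmem⟩ | ⟨_, hmem⟩
        · exact Or.inl ⟨⟨i, hi⟩, (mem_edges_W (by omega) _ e).mpr hmem⟩
        · exact Or.inr ((mem_edgeSet_FF e).mpr hmem)


/-! ### Transfer along an equivalence -/

section Transfer

variable {α β : Type*} [DecidableEq α] [DecidableEq β] (q : α ≃ β)

/-- the graph hom between complete graphs induced by an equivalence. -/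
def topHom : (⊤ : SimpleGraph α) →g (⊤ : SimpleGraph β) :=
  ⟨⇑q, by intro a b h; simp only [top_adj] at h ⊢; exact fun e => h (q.injective e)⟩

lemma topHom_coe : ⇑(topHom q) = ⇑q := rfl

lemma topHom_bijective : Function.Bijective ⇑(topHom q) := by
  rw [topHom_coe]; exact q.bijective

lemma edgesSet_map {a : α} (w : (⊤ : SimpleGraph α).Walk a a) :
    {e | e ∈ (w.map (topHom q)).edges} = Sym2.map ⇑q '' {e | e ∈ w.edges} := by
  ext e
  rw [Set.mem_setOf_eq, Walk.edges_map, List.mem_map]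
  simp only [Set.mem_setOf_eq, Set.mem_image, topHom_coe]

lemma image_edgeSet_top :
    Sym2.map ⇑q '' (⊤ : SimpleGraph α).edgeSet = (⊤ : SimpleGraph β).edgeSet := by
  ext e
  constructor
  · rintro ⟨e0, he0, rfl⟩
    induction e0 using Sym2.ind with
    | _ x y =>
      rw [Sym2.map_pair_eq]
      rw [SimpleGraph.mem_edgeSet, top_adj] at he0 ⊢
      exact fun h => he0 (q.injective h)
  · intro he
    induction e using Sym2.ind with
    | _ x y =>
      rw [SimpleGraph.mem_edgeSet, top_adj] at he
      refine ⟨s(q.symm x, q.symm y), ?_, ?_⟩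
      · rw [SimpleGraph.mem_edgeSet, top_adj]
        exact fun h => he (by simpa using congrArg q h)
      · rw [Sym2.map_pair_eq, q.apply_symm_apply, q.apply_symm_apply]

/-- transfer of a subgraph of the complete graph along an equivalence. -/
def mapSub (F : (⊤ : SimpleGraph α).Subgraph) : (⊤ : SimpleGraph β).Subgraph where
  verts := Set.univ
  Adj x y := F.Adj (q.symm x) (q.symm y)
  adj_sub := by
    intro x y h
    have h2 := F.adj_sub h
    simp only [top_adj] at h2 ⊢
    exact fun e => h2 (by rw [e])
  edge_vert := fun _ => Set.mem_univ _
  symm := ⟨fun x y h => F.symm.symm _ _ h⟩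

lemma mapSub_isPerfectMatching {F : (⊤ : SimpleGraph α).Subgraph}
    (hF : F.IsPerfectMatching) : (mapSub q F).IsPerfectMatching := by
  rw [SimpleGraph.Subgraph.isPerfectMatching_iff] at hF ⊢
  intro v
  obtain ⟨w, hw, huniq⟩ := hF (q.symm v)
  refine ⟨q w, ?_, ?_⟩
  · show F.Adj (q.symm v) (q.symm (q w))
    rwa [q.symm_apply_apply]
  · intro y hy
    have h2 := huniq (q.symm y) hy
    rw [← h2, q.apply_symm_apply]

lemma mapSub_edgeSet (F : (⊤ : SimpleGraph α).Subgraph) :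
    (mapSub q F).edgeSet = Sym2.map ⇑q '' F.edgeSet := by
  ext e
  induction e using Sym2.ind with
  | _ x y =>
    rw [SimpleGraph.Subgraph.mem_edgeSet]
    constructor
    · intro h
      refine ⟨s(q.symm x, q.symm y), h, ?_⟩
      rw [Sym2.map_pair_eq, q.apply_symm_apply, q.apply_symm_apply]
    · rintro ⟨e0, he0, he⟩
      induction e0 using Sym2.ind with
      | _ u v =>
        rw [SimpleGraph.Subgraph.mem_edgeSet] at he0
        rw [Sym2.map_pair_eq, Sym2.eq_iff] at he
        rcases he with ⟨rfl, rfl⟩ | ⟨rfl, rfl⟩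
        · show F.Adj (q.symm (q u)) (q.symm (q v))
          rwa [q.symm_apply_apply, q.symm_apply_apply]
        · show F.Adj (q.symm (q v)) (q.symm (q u))
          rw [q.symm_apply_apply, q.symm_apply_apply]
          exact F.symm.symm _ _ he0

end Transfer

/-! ### The core theorem over `Fin (m+1)` -/

theorem core_fin (m c : ℕ) [NeZero m] (hc : m = 2*c ∨ m = 2*c + 1) :
    ∃ cyc : Fin c → Σ a : Fin (m+1), (⊤ : SimpleGraph (Fin (m+1))).Walk a a,
      (∀ i, (cyc i).2.IsHamiltonianCycle) ∧
      (Set.univ : Set (Fin c)).PairwiseDisjoint (fun i => {e | e ∈ (cyc i).2.edges}) ∧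
      (m = 2*c → (⋃ i, {e | e ∈ (cyc i).2.edges}) = (⊤ : SimpleGraph (Fin (m+1))).edgeSet) ∧
      (m = 2*c + 1 → ∃ F : (⊤ : SimpleGraph (Fin (m+1))).Subgraph, F.IsPerfectMatching ∧
        (∀ i, Disjoint {e | e ∈ (cyc i).2.edges} F.edgeSet) ∧
        ((⋃ i, {e | e ∈ (cyc i).2.edges}) ∪ F.edgeSet
          = (⊤ : SimpleGraph (Fin (m+1))).edgeSet)) := by
  obtain ⟨k, rfl⟩ : ∃ k, m = k + 1 := ⟨m - 1, by have := NeZero.ne m; omega⟩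
  obtain ⟨cyc, h1, h2, h3, h4⟩ := core (k+1) c hc
  let q : V (k+1) ≃ Fin (k+1+1) := (finSuccEquiv (k+1)).symm
  refine ⟨fun i => ⟨q (cyc i).1, ((cyc i).2.map (topHom q))⟩, ?_, ?_, ?_, ?_⟩
  · intro i
    exact (h1 i).map (topHom_bijective q)
  · intro i _ i' _ hne
    have h2' := h2 (Set.mem_univ i) (Set.mem_univ i') hne
    simp only [Function.onFun] at h2' ⊢
    show Disjoint {e | e ∈ ((cyc i).2.map (topHom q)).edges}
      {e | e ∈ ((cyc i').2.map (topHom q)).edges}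
    rw [edgesSet_map, edgesSet_map, Set.disjoint_image_iff (Sym2.map.injective q.injective)]
    exact h2'
  · intro hme
    show (⋃ i, {e | e ∈ ((cyc i).2.map (topHom q)).edges}) = _
    have h5 : (⋃ i, {e | e ∈ ((cyc i).2.map (topHom q)).edges})
        = ⋃ i, Sym2.map ⇑q '' {e | e ∈ (cyc i).2.edges} :=
      Set.iUnion_congr fun i => edgesSet_map q _
    rw [h5, ← Set.image_iUnion, h3 hme, image_edgeSet_top]
  · intro hmodd
    obtain ⟨F, hF, hdisj, huni⟩ := h4 hmodd
    refine ⟨mapSub q F, mapSub_isPerfectMatching q hF, ?_, ?_⟩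
    · intro i
      show Disjoint {e | e ∈ ((cyc i).2.map (topHom q)).edges} (mapSub q F).edgeSet
      rw [edgesSet_map, mapSub_edgeSet,
        Set.disjoint_image_iff (Sym2.map.injective q.injective)]
      exact hdisj i
    · show (⋃ i, {e | e ∈ ((cyc i).2.map (topHom q)).edges}) ∪ (mapSub q F).edgeSet = _
      have h5 : (⋃ i, {e | e ∈ ((cyc i).2.map (topHom q)).edges})
          = ⋃ i, Sym2.map ⇑q '' {e | e ∈ (cyc i).2.edges} :=
        Set.iUnion_congr fun i => edgesSet_map q _
      rw [h5, mapSub_edgeSet, ← Set.image_iUnion, ← Set.image_union, huni, image_edgeSet_top]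

end Walecki

/-- Walecki construction.
For every `N`, the edge set of the complete graph `K_N` on `N` vertices can be
partitioned into `(N−1)/2` Hamiltonian cycles when `N` is odd, and into
`(N−2)/2` Hamiltonian cycles together with one perfect matching when `N` is
even. -/
theorem walecki_decomposition (N : ℕ) :
    (Odd N →
      ∃ c : Fin ((N - 1) / 2) → Σ a : Fin N, (⊤ : SimpleGraph (Fin N)).Walk a a,
        (∀ i, (c i).2.IsHamiltonianCycle) ∧
        (Set.univ : Set (Fin ((N - 1) / 2))).PairwiseDisjoint
          (fun i => {e | e ∈ (c i).2.edges}) ∧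
        (⋃ i, {e | e ∈ (c i).2.edges}) = (⊤ : SimpleGraph (Fin N)).edgeSet) ∧
    (Even N →
      ∃ (c : Fin ((N - 2) / 2) → Σ a : Fin N, (⊤ : SimpleGraph (Fin N)).Walk a a)
        (F : (⊤ : SimpleGraph (Fin N)).Subgraph),
        (∀ i, (c i).2.IsHamiltonianCycle) ∧
        F.IsPerfectMatching ∧
        (Set.univ : Set (Fin ((N - 2) / 2))).PairwiseDisjoint
          (fun i => {e | e ∈ (c i).2.edges}) ∧
        (∀ i, Disjoint {e | e ∈ (c i).2.edges} F.edgeSet) ∧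
        ((⋃ i, {e | e ∈ (c i).2.edges}) ∪ F.edgeSet = (⊤ : SimpleGraph (Fin N)).edgeSet)) := by
  constructor
  · intro hodd
    obtain ⟨t, ht⟩ := hodd
    rcases Nat.lt_or_ge N 2 with hN | hN
    · -- N = 1
      have hN1 : N = 1 := by omega
      subst hN1
      haveI hie : IsEmpty (Fin ((1 - 1) / 2)) := ⟨fun i => absurd i.isLt (by omega)⟩
      have hempty : (⊤ : SimpleGraph (Fin 1)).edgeSet = ∅ := by
        ext e
        induction e using Sym2.ind with
        | _ x y => simp [Subsingleton.elim x y]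
      refine ⟨fun i => isEmptyElim i, fun i => isEmptyElim i, fun i _ => isEmptyElim i, ?_⟩
      rw [Set.iUnion_of_empty, hempty]
    · obtain ⟨k, rfl⟩ : ∃ k, N = k + 2 := ⟨N - 2, by omega⟩
      obtain ⟨cyc, H1, H2, H3, _⟩ :=
        Walecki.core_fin (k+1) ((k+1)/2) (Or.inl (by omega))
      exact ⟨cyc, H1, H2, H3 (by omega)⟩
  · intro heven
    obtain ⟨t, ht⟩ := heven
    rcases Nat.lt_or_ge N 2 with hN | hN
    · -- N = 0
      have hN0 : N = 0 := by omega
      subst hN0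
      haveI hie : IsEmpty (Fin ((0 - 2) / 2)) := ⟨fun i => absurd i.isLt (by omega)⟩
      have hempty : (⊤ : SimpleGraph (Fin 0)).edgeSet = ∅ := by
        ext e
        induction e using Sym2.ind with
        | _ x y => exact isEmptyElim x
      refine ⟨fun i => isEmptyElim i, ⊥, fun i => isEmptyElim i, ?_, fun i _ => isEmptyElim i,
        fun i => isEmptyElim i, ?_⟩
      · rw [SimpleGraph.Subgraph.isPerfectMatching_iff]
        exact fun v => isEmptyElim v
      · rw [Set.iUnion_of_empty, SimpleGraph.Subgraph.edgeSet_bot, Set.empty_union, hempty]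
    · obtain ⟨k, rfl⟩ : ∃ k, N = k + 2 := ⟨N - 2, by omega⟩
      obtain ⟨cyc, H1, H2, H3, H4⟩ :=
        Walecki.core_fin (k+1) (k/2) (Or.inr (by omega))
      obtain ⟨F, hF, hdisj, huni⟩ := H4 (by omega)
      exact ⟨cyc, F, H1, hF, H2, hdisj, huni⟩
end
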